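/- Let h1, h2 : ℤ⁴ → ℤ⁴ be the maps h1(k1,k2,q1,q2) = (k1+k2, k2, k2+q1−q2, q2) and h2(k1,k2,q1,q2) = (k2, k1, q2, q1). The smallest subset of ℤ⁴ that contains (1,1,0,0) and is closed under h1 and h2 is exactly the set D_P of integer quadruples (k1,k2,q1,q2) with k1 > 0, k2 > 0, 0 ≤ q1 < k1, 0 ≤ q2 < k2 and k1·k2 − k1·q2 − k2·q1 = 1. -/
import Mathlib


/-- The map `h1(k1,k2,q1,q2) = (k1+k2, k2, k2+q1−q2, q2)`. -/
def h1 : ℤ × ℤ × ℤ × ℤ → ℤ × ℤ × ℤ × ℤ :=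
  fun s => (s.1 + s.2.1, s.2.1, s.2.1 + s.2.2.1 - s.2.2.2, s.2.2.2)

/-- The map `h2(k1,k2,q1,q2) = (k2, k1, q2, q1)`. -/
def h2 : ℤ × ℤ × ℤ × ℤ → ℤ × ℤ × ℤ × ℤ :=
  fun s => (s.2.1, s.1, s.2.2.2, s.2.2.1)

/-- The set `D_P` of integer quadruples `(k1,k2,q1,q2)` with `k1 > 0`, `k2 > 0`,
    `0 ≤ q1 < k1`, `0 ≤ q2 < k2` and `k1·k2 − k1·q2 − k2·q1 = 1`. -/
def DP : Set (ℤ × ℤ × ℤ × ℤ) :=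
  {s | 0 < s.1 ∧ 0 < s.2.1 ∧ 0 ≤ s.2.2.1 ∧ s.2.2.1 < s.1 ∧ 0 ≤ s.2.2.2 ∧ s.2.2.2 < s.2.1 ∧
    s.1 * s.2.1 - s.1 * s.2.2.2 - s.2.1 * s.2.2.1 = 1}

lemma dp_mem_iff (a b c d : ℤ) : (a, b, c, d) ∈ DP ↔
    0 < a ∧ 0 < b ∧ 0 ≤ c ∧ c < a ∧ 0 ≤ d ∧ d < b ∧ a * b - a * d - b * c = 1 := Iff.rfl

lemma dp_pred {a b c d : ℤ} (h : (a, b, c, d) ∈ DP) (hab : b < a) :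
    (a - b, b, c - b + d, d) ∈ DP := by
  rw [dp_mem_iff] at h ⊢
  obtain ⟨hA, hB, h3, h4, h5, h6, h7⟩ := h
  refine ⟨by linarith, hB, ?_, ?_, h5, h6, by linear_combination h7⟩
  · nlinarith [mul_nonneg (sub_nonneg.mpr hab.le) h3,
      mul_nonneg hA.le (by linarith : (0:ℤ) ≤ b - d)]
  · nlinarith [mul_nonneg (sub_nonneg.mpr hab.le) h5]

lemma key : ∀ n : ℕ, ∀ a b c d : ℤ, (a, b, c, d) ∈ DP → a + b ≤ (n : ℤ) →
    ∀ S : Set (ℤ × ℤ × ℤ × ℤ), (1, 1, 0, 0) ∈ S → (∀ t ∈ S, h1 t ∈ S) → (∀ t ∈ S, h2 t ∈ S) →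
    (a, b, c, d) ∈ S := by
  intro n
  induction n with
  | zero =>
    intro a b c d hdp hle S _ _ _
    rw [dp_mem_iff] at hdp
    exfalso; omega
  | succ n ih =>
    intro a b c d hdp hle S hS hS1 hS2
    rw [dp_mem_iff] at hdp
    obtain ⟨ha, hb, hc0, hc, hd0, hd, heq⟩ := hdp
    rcases lt_trichotomy a b with hlt | heqk | hgt
    · -- a < b : use swap
      have hswap : (b, a, d, c) ∈ DP := by
        rw [dp_mem_iff]
        exact ⟨hb, ha, hd0, hd, hc0, hc, by linear_combination heq⟩
      have hpred := dp_pred hswap hlt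
      have hmem : (b - a, a, d - a + c, c) ∈ S := by
        apply ih _ _ _ _ hpred _ S hS hS1 hS2
        push_cast at hle ⊢; linarith
      have h1mem := hS2 _ (hS1 _ hmem)
      have hE : h2 (h1 (b - a, a, d - a + c, c)) = (a, b, c, d) := by
        simp only [h1, h2, Prod.mk.injEq]
        norm_num
        ring
      rwa [hE] at h1mem
    · -- a = b
      subst heqk
      have ha1 : a = 1 := by
        have hmul : a * (a - d - c) = 1 := by linear_combination heq
        exact Int.eq_one_of_mul_eq_one_right ha.le hmul
      subst ha1
      have hc' : c = 0 := by omega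
      have hd' : d = 0 := by omega
      subst hc'; subst hd'
      exact hS
    · -- a > b
      have hpred := dp_pred (by rw [dp_mem_iff]; exact ⟨ha, hb, hc0, hc, hd0, hd, heq⟩) hgt
      have hmem : (a - b, b, c - b + d, d) ∈ S := by
        apply ih _ _ _ _ hpred _ S hS hS1 hS2
        push_cast at hle ⊢; linarith
      have h1mem := hS1 _ hmem
      have hE : h1 (a - b, b, c - b + d, d) = (a, b, c, d) := by
        simp only [h1, Prod.mk.injEq]
        norm_num
        ring
      rwa [hE] at h1mem

theorem stmt1 :
    ⋂₀ {S : Set (ℤ × ℤ × ℤ × ℤ) |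
        (1, 1, 0, 0) ∈ S ∧ (∀ s ∈ S, h1 s ∈ S) ∧ (∀ s ∈ S, h2 s ∈ S)} = DP := by
  apply le_antisymm
  · intro s hs
    apply hs DP
    refine ⟨by rw [dp_mem_iff]; norm_num, ?_, ?_⟩
    · rintro ⟨a, b, c, d⟩ hmem
      rw [dp_mem_iff] at hmem
      obtain ⟨ha, hb, hc0, hc, hd0, hd, heq⟩ := hmem
      show h1 (a, b, c, d) ∈ DP
      simp only [h1]
      rw [dp_mem_iff]
      exact ⟨by linarith, hb, by linarith, by linarith, hd0, hd, by linear_combination heq⟩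
    · rintro ⟨a, b, c, d⟩ hmem
      rw [dp_mem_iff] at hmem
      obtain ⟨ha, hb, hc0, hc, hd0, hd, heq⟩ := hmem
      show h2 (a, b, c, d) ∈ DP
      simp only [h2]
      rw [dp_mem_iff]
      exact ⟨hb, ha, hd0, hd, hc0, hc, by linear_combination heq⟩
  · rintro ⟨a, b, c, d⟩ hdp S hSmem
    obtain ⟨hS, hS1, hS2⟩ := hSmem
    have h' := hdp
    rw [dp_mem_iff] at h'
    exact key (a + b).toNat a b c d hdp (by omega) S hS hS1 hS2
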